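/- Let a ≥ 3 be an integer and let λ > 1 be the real root of λ² − aλ + 1 = 0. Let ℤ[λ]⋊_λℤ be the group of 2×2 real matrices [[λ^k, x],[0, 1]] with k ∈ ℤ and x ∈ ℤ[λ] (the subring of ℝ generated by λ), noting that every x ∈ ℤ[λ] can be written uniquely as x = x₁ + λ·x_λ with x₁, x_λ ∈ ℤ. Let A_λ := [[0, −1],[1, a]] ∈ SL(2,ℤ). Then the map φ : ℤ[λ]⋊_λℤ → SA(2,ℤ) defined by φ([[λ^k, x],[0,1]]) = (A_λ^k, (x₁, x_λ)ᵀ) is an injective group homomorphism. -/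

import Mathlib

open scoped Matrix

abbrev SL2Z := Matrix.SpecialLinearGroup (Fin 2) ℤ

/-- The special affine group `SA(2, ℤ) = ℤ² ⋊ SL(2, ℤ)`, as pairs `(A, a)`. -/
@[ext]
structure SA2 : Type where
  lin : SL2Z
  trans : Fin 2 → ℤ

namespace SA2

instance : Mul SA2 :=
  ⟨fun p q => ⟨p.lin * q.lin, (p.lin : Matrix (Fin 2) (Fin 2) ℤ) *ᵥ q.trans + p.trans⟩⟩

instance : One SA2 := ⟨⟨1, 0⟩⟩

instance : Inv SA2 :=
  ⟨fun p => ⟨p.lin⁻¹, -(((p.lin⁻¹ : SL2Z) : Matrix (Fin 2) (Fin 2) ℤ) *ᵥ p.trans)⟩⟩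

@[simp] lemma mul_lin (p q : SA2) : (p * q).lin = p.lin * q.lin := rfl
@[simp] lemma mul_trans (p q : SA2) :
    (p * q).trans = (p.lin : Matrix (Fin 2) (Fin 2) ℤ) *ᵥ q.trans + p.trans := rfl
@[simp] lemma one_lin : (1 : SA2).lin = 1 := rfl
@[simp] lemma one_trans : (1 : SA2).trans = 0 := rfl
@[simp] lemma inv_lin (p : SA2) : (p⁻¹).lin = p.lin⁻¹ := rfl
@[simp] lemma inv_trans (p : SA2) :
    (p⁻¹).trans = -(((p.lin⁻¹ : SL2Z) : Matrix (Fin 2) (Fin 2) ℤ) *ᵥ p.trans) := rfl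

instance : Group SA2 where
  mul_assoc a b c := by
    ext i
    · rw [mul_lin, mul_lin, mul_lin, mul_lin, mul_assoc]
    · simp only [mul_trans, mul_lin, Matrix.SpecialLinearGroup.coe_mul, Matrix.mulVec_add,
        Matrix.mulVec_mulVec, add_assoc]
  one_mul a := by
    ext i
    · simp
    · simp
  mul_one a := by
    ext i
    · simp
    · simp [Matrix.mulVec_zero]
  inv_mul_cancel a := by
    ext i
    · simp
    · simp only [mul_trans, inv_trans, inv_lin, Matrix.SpecialLinearGroup.coe_inv, one_trans,
        add_neg_cancel]

end SA2

/-- The underlying set of the group `ℤ[λ] ⋊_λ ℤ`, as `2×2` real matrices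
`[[λ^k, x],[0,1]]` with `k ∈ ℤ` and `x = x₁ + λ·x_λ ∈ ℤ[λ]`. -/
def ZlamSemidirect (lam : ℝ) : Set (Matrix (Fin 2) (Fin 2) ℝ) :=
  {M | ∃ k x₁ xl : ℤ, M = !![lam ^ k, (x₁ : ℝ) + lam * (xl : ℝ); (0 : ℝ), (1 : ℝ)]}

/-- The matrix `A_λ = [[0,-1],[1,a]] ∈ SL(2,ℤ)`. -/
def Alam (a : ℤ) : SL2Z :=
  ⟨!![0, -1; 1, a], by norm_num [Matrix.det_fin_two_of]⟩


noncomputable section AuxZlam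

/-- Evaluation of an integer coordinate vector against the basis `{1, lam}`. -/
def evlam (lam : ℝ) (v : Fin 2 → ℤ) : ℝ := (v 0 : ℝ) + lam * (v 1 : ℝ)

lemma evlam_add (lam : ℝ) (u v : Fin 2 → ℤ) :
    evlam lam (u + v) = evlam lam u + evlam lam v := by
  simp [evlam]; ring

lemma evlam_mulVec (a : ℤ) (lam : ℝ) (hroot : lam ^ 2 - (a : ℝ) * lam + 1 = 0)
    (v : Fin 2 → ℤ) :
    evlam lam (((Alam a : SL2Z) : Matrix (Fin 2) (Fin 2) ℤ) *ᵥ v) = lam * evlam lam v := by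
  simp only [evlam, Alam, Matrix.mulVec, dotProduct, Fin.sum_univ_two]
  simp
  linear_combination (-(v 1 : ℝ)) * hroot

lemma evlam_zpow (a : ℤ) (lam : ℝ) (hlam : 1 < lam)
    (hroot : lam ^ 2 - (a : ℝ) * lam + 1 = 0) (k : ℤ) (v : Fin 2 → ℤ) :
    evlam lam (((Alam a ^ k : SL2Z) : Matrix (Fin 2) (Fin 2) ℤ) *ᵥ v)
      = lam ^ k * evlam lam v := by
  have hlam0 : lam ≠ 0 := by positivity
  induction k using Int.induction_on with
  | zero => simp
  | succ n ih =>
      have h1 : (Alam a ^ ((n : ℤ) + 1) : SL2Z) = Alam a * Alam a ^ (n : ℤ) := by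
        rw [add_comm, zpow_add, zpow_one]
      have h3 : lam ^ ((n : ℤ) + 1) = lam * lam ^ (n : ℤ) := by
        rw [add_comm, zpow_add₀ hlam0, zpow_one]
      rw [h1, Matrix.SpecialLinearGroup.coe_mul, ← Matrix.mulVec_mulVec,
        evlam_mulVec a lam hroot, ih, h3]
      ring
  | pred n ih =>
      have h1 : Alam a * Alam a ^ (-(n : ℤ) - 1) = Alam a ^ (-(n : ℤ)) := by
        calc Alam a * Alam a ^ (-(n : ℤ) - 1)
            = Alam a ^ ((1 : ℤ) + (-(n : ℤ) - 1)) := by rw [zpow_add, zpow_one]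
          _ = Alam a ^ (-(n : ℤ)) := by congr 1; ring
      have h3 : lam * lam ^ (-(n : ℤ) - 1) = lam ^ (-(n : ℤ)) := by
        calc lam * lam ^ (-(n : ℤ) - 1)
            = lam ^ ((1 : ℤ) + (-(n : ℤ) - 1)) := by rw [zpow_add₀ hlam0, zpow_one]
          _ = lam ^ (-(n : ℤ)) := by congr 1; ring
      apply mul_left_cancel₀ hlam0
      rw [← evlam_mulVec a lam hroot, Matrix.mulVec_mulVec,
        ← Matrix.SpecialLinearGroup.coe_mul, h1, ih, ← mul_assoc, h3]

lemma lam_not_rat (a : ℤ) (ha : 3 ≤ a) (lam : ℝ) (hlam : 1 < lam)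
    (hroot : lam ^ 2 - (a : ℝ) * lam + 1 = 0) (c d : ℤ) (h : (d : ℝ) * lam = c) :
    d = 0 := by
  by_contra hd
  have hdR : (d : ℝ) ≠ 0 := Int.cast_ne_zero.mpr hd
  set q : ℚ := (c : ℚ) / (d : ℚ) with hq
  have hlamq : lam = (q : ℝ) := by
    have hdQ : ((d : ℚ) : ℝ) ≠ 0 := by push_cast; exact hdR
    rw [hq]
    push_cast
    field_simp
    linarith [h]
  have hqroot : q ^ 2 - (a : ℚ) * q + 1 = 0 := by
    have : ((q ^ 2 - (a : ℚ) * q + 1 : ℚ) : ℝ) = 0 := by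
      push_cast
      rw [← hlamq]
      exact hroot
    exact_mod_cast this
  set m : ℤ := q.num with hm
  set n : ℤ := (q.den : ℤ) with hn
  have hnpos : (0 : ℤ) < n := by rw [hn]; exact_mod_cast q.den_pos
  have hn0 : n ≠ 0 := hnpos.ne'
  have hnQ : (n : ℚ) ≠ 0 := Int.cast_ne_zero.mpr hn0
  have hmq : (m : ℚ) = q * (n : ℚ) := by
    have h0 : (m : ℚ) / (n : ℚ) = q := by
      rw [hm, hn]; exact_mod_cast Rat.num_div_den q
    field_simp at h0
    linarith [h0]
  have hZ : m ^ 2 - a * m * n + n ^ 2 = 0 := by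
    have hQ : ((m : ℚ)) ^ 2 - (a : ℚ) * m * n + (n : ℚ) ^ 2 = 0 := by
      calc ((m : ℚ)) ^ 2 - (a : ℚ) * m * n + (n : ℚ) ^ 2
          = (n : ℚ) ^ 2 * (q ^ 2 - (a : ℚ) * q + 1) := by rw [hmq]; ring
        _ = 0 := by rw [hqroot, mul_zero]
    exact_mod_cast hQ
  have hcop : IsCoprime m n := by
    rw [Int.isCoprime_iff_gcd_eq_one]
    exact q.reduced
  have hdvd : n ∣ m * m := ⟨a * m - n, by nlinarith [hZ]⟩
  have hunit : IsUnit n :=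
    (hcop.symm.mul_right hcop.symm).isUnit_of_dvd' dvd_rfl hdvd
  have hn1 : n = 1 := by
    rcases Int.isUnit_iff.mp hunit with h1 | h1
    · exact h1
    · omega
  have hque : q = (m : ℚ) := by
    have h5 := hmq
    rw [hn1] at h5
    simpa using h5.symm
  have hmZ : m * (a - m) = 1 := by nlinarith [hZ, hn1]
  have hmle : m ≤ 1 := by
    rcases Int.isUnit_iff.mp (IsUnit.of_mul_eq_one (a - m) hmZ) with h1 | h1 <;> omega
  have : lam ≤ 1 := by
    rw [hlamq, hque]
    exact_mod_cast hmle
  linarith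

lemma evlam_inj (a : ℤ) (ha : 3 ≤ a) (lam : ℝ) (hlam : 1 < lam)
    (hroot : lam ^ 2 - (a : ℝ) * lam + 1 = 0) (x₁ xl y₁ yl : ℤ)
    (h : (x₁ : ℝ) + lam * (xl : ℝ) = (y₁ : ℝ) + lam * (yl : ℝ)) :
    x₁ = y₁ ∧ xl = yl := by
  have h1 : ((xl - yl : ℤ) : ℝ) * lam = ((y₁ - x₁ : ℤ) : ℝ) := by push_cast; linarith
  have h2 : xl - yl = 0 := lam_not_rat a ha lam hlam hroot _ _ h1
  have h3 : xl = yl := by omega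
  refine ⟨?_, h3⟩
  have : (x₁ : ℝ) = (y₁ : ℝ) := by rw [h3] at h; linarith
  exact_mod_cast this

end AuxZlam

/-- For an integer `a ≥ 3` and the root `λ > 1` of `λ² − aλ + 1 = 0`,
the map `φ : ℤ[λ]⋊_λℤ → SA(2,ℤ)`, `[[λ^k, x₁ + λ·x_λ],[0,1]] ↦ (A_λ^k, (x₁, x_λ)ᵀ)`,
is a well-defined injective group homomorphism. -/
theorem Zlam_semidirect_embeds_in_SA2
    (a : ℤ) (ha : 3 ≤ a) (lam : ℝ) (hlam : 1 < lam)
    (hroot : lam ^ 2 - (a : ℝ) * lam + 1 = 0) :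
    ∃ φ : Matrix (Fin 2) (Fin 2) ℝ → SA2,
      (∀ k x₁ xl : ℤ,
        φ !![lam ^ k, (x₁ : ℝ) + lam * (xl : ℝ); (0 : ℝ), (1 : ℝ)]
          = SA2.mk (Alam a ^ k) ![x₁, xl]) ∧
      (∀ M ∈ ZlamSemidirect lam, ∀ N ∈ ZlamSemidirect lam, φ (M * N) = φ M * φ N) ∧
      (∀ M ∈ ZlamSemidirect lam, ∀ N ∈ ZlamSemidirect lam, φ M = φ N → M = N) := by
  have hlam0 : (0:ℝ) < lam := by linarith
  have hinj : Function.Injective fun k : ℤ => lam ^ k :=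
    (zpow_right_strictMono₀ hlam).injective
  have huniq : ∀ k k' x₁ x₁' xl xl' : ℤ,
      (!![lam ^ k, (x₁ : ℝ) + lam * (xl : ℝ); (0:ℝ), (1:ℝ)]
        = !![lam ^ k', (x₁' : ℝ) + lam * (xl' : ℝ); (0:ℝ), (1:ℝ)]) →
      k = k' ∧ x₁ = x₁' ∧ xl = xl' := by
    intro k k' x₁ x₁' xl xl' h
    have h00 := congrFun (congrFun h 0) 0
    have h01 := congrFun (congrFun h 0) 1
    simp at h00 h01
    exact ⟨hinj h00, evlam_inj a ha lam hlam hroot _ _ _ _ h01⟩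
  classical
  set φ : Matrix (Fin 2) (Fin 2) ℝ → SA2 := fun M =>
    if h : ∃ k x₁ xl : ℤ, M = !![lam ^ k, (x₁ : ℝ) + lam * (xl : ℝ); (0:ℝ), (1:ℝ)]
    then SA2.mk (Alam a ^ h.choose)
      ![h.choose_spec.choose, h.choose_spec.choose_spec.choose]
    else 1 with hφdef
  have hspec : ∀ k x₁ xl : ℤ,
      φ !![lam ^ k, (x₁ : ℝ) + lam * (xl : ℝ); (0:ℝ), (1:ℝ)]
        = SA2.mk (Alam a ^ k) ![x₁, xl] := by
    intro k x₁ xl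
    have h : ∃ k' x₁' xl' : ℤ,
        !![lam ^ k, (x₁ : ℝ) + lam * (xl : ℝ); (0:ℝ), (1:ℝ)]
          = !![lam ^ k', (x₁' : ℝ) + lam * (xl' : ℝ); (0:ℝ), (1:ℝ)] := ⟨k, x₁, xl, rfl⟩
    simp only [hφdef]
    rw [dif_pos h]
    obtain ⟨hk, h1, hl⟩ := huniq _ _ _ _ _ _ h.choose_spec.choose_spec.choose_spec
    apply SA2.ext
    · exact congrArg (fun t : ℤ => Alam a ^ t) hk.symm
    · funext i
      fin_cases i
      · simpa using h1.symm
      · simpa using hl.symm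
  refine ⟨φ, hspec, ?_, ?_⟩
  · -- homomorphism
    rintro M ⟨k, x₁, xl, rfl⟩ N ⟨m, y₁, yl, rfl⟩
    set w : Fin 2 → ℤ :=
      ((Alam a ^ k : SL2Z) : Matrix (Fin 2) (Fin 2) ℤ) *ᵥ ![y₁, yl] + ![x₁, xl] with hw
    have hevy : evlam lam ![y₁, yl] = (y₁ : ℝ) + lam * (yl : ℝ) := by simp [evlam]
    have hevx : evlam lam ![x₁, xl] = (x₁ : ℝ) + lam * (xl : ℝ) := by simp [evlam]
    have hevw : (w 0 : ℝ) + lam * (w 1 : ℝ)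
        = lam ^ k * ((y₁ : ℝ) + lam * (yl : ℝ)) + ((x₁ : ℝ) + lam * (xl : ℝ)) := by
      have h1 : evlam lam w = lam ^ k * ((y₁ : ℝ) + lam * (yl : ℝ))
          + ((x₁ : ℝ) + lam * (xl : ℝ)) := by
        rw [hw, evlam_add, evlam_zpow a lam hlam hroot, hevy, hevx]
      simpa [evlam] using h1
    have hMN : !![lam ^ k, (x₁ : ℝ) + lam * (xl : ℝ); (0:ℝ), (1:ℝ)]
          * !![lam ^ m, (y₁ : ℝ) + lam * (yl : ℝ); (0:ℝ), (1:ℝ)]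
        = !![lam ^ (k + m), (w 0 : ℝ) + lam * (w 1 : ℝ); (0:ℝ), (1:ℝ)] := by
      rw [Matrix.mul_fin_two, hevw, zpow_add₀ hlam0.ne']
      congr 1 <;> ring
    rw [hMN, hspec (k + m) (w 0) (w 1), hspec, hspec]
    have hwv : ![w 0, w 1] = w := by
      funext i; fin_cases i <;> rfl
    apply SA2.ext
    · simp only [SA2.mul_lin]
      exact zpow_add _ _ _
    · simp only [SA2.mul_trans]
      show ![w 0, w 1] = _
      rw [hwv, hw]
  · -- injectivity
    rintro M ⟨k, x₁, xl, rfl⟩ N ⟨m, y₁, yl, rfl⟩ hEq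
    rw [hspec, hspec] at hEq
    have hlin : (Alam a ^ k : SL2Z) = Alam a ^ m := congrArg SA2.lin hEq
    have htr : (![x₁, xl] : Fin 2 → ℤ) = ![y₁, yl] := congrArg SA2.trans hEq
    have he : evlam lam ![1, 0] = 1 := by simp [evlam]
    have h1 := evlam_zpow a lam hlam hroot k ![1, 0]
    have h2 := evlam_zpow a lam hlam hroot m ![1, 0]
    rw [hlin] at h1
    rw [he, mul_one] at h1
    rw [he, mul_one] at h2
    have hk : lam ^ k = lam ^ m := h1.symm.trans h2
    have hkm : k = m := hinj hk
    have hx : x₁ = y₁ := by simpa using congrFun htr 0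
    have hl : xl = yl := by simpa using congrFun htr 1
    rw [hkm, hx, hl]
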